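/- Let μ be a probability measure and f a bounded measurable function with f ≥ δ > 0. Then the limit as p → 1⁺ of (p/(p-1))·[∫f² dμ - (∫f^{2/p} dμ)^p] equals ∫ f² log(f²/∫f² dμ) dμ. -/

import Mathlib

open MeasureTheory Filter Topology

theorem stmt_16 {α : Type*} [MeasurableSpace α] (μ : Measure α) [IsProbabilityMeasure μ]
    (f : α → ℝ) (δ : ℝ) (hδ : 0 < δ) (hf : Measurable f)
    (hbdd : ∃ M, ∀ x, f x ≤ M) (hlb : ∀ x, δ ≤ f x) :
    Tendsto
      (fun p : ℝ => (p / (p - 1)) * (∫ x, f x ^ 2 ∂μ - (∫ x, f x ^ (2 / p) ∂μ) ^ p))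
      (𝓝[>] 1)
      (𝓝 (∫ x, f x ^ 2 * Real.log (f x ^ 2 / ∫ y, f y ^ 2 ∂μ) ∂μ)) := by
  obtain ⟨M, hM⟩ := hbdd
  have hfpos : ∀ x, 0 < f x := fun x => hδ.trans_le (hlb x)
  set C : ℝ := max M 1 with hCdef
  have hC1 : (1:ℝ) ≤ C := le_max_right _ _
  have hC0 : (0:ℝ) < C := lt_of_lt_of_le one_pos hC1
  have hfC : ∀ x, f x ≤ C := fun x => (hM x).trans (le_max_left _ _)
  -- conversion between rpow at 2/1 and npow 2
  have h21 : ∀ x : α, f x ^ ((2:ℝ) / 1) = f x ^ 2 := by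
    intro x
    rw [div_one, show (2:ℝ) = ((2:ℕ):ℝ) by norm_num, Real.rpow_natCast]
  -- integrability of f^2
  have meas2 : Measurable fun x => f x ^ 2 := hf.pow_const 2
  have int_f2 : Integrable (fun x => f x ^ 2) μ := by
    apply (integrable_const (C ^ 2)).mono' meas2.aestronglyMeasurable
    filter_upwards with x
    rw [Real.norm_eq_abs, abs_of_nonneg (sq_nonneg _)]
    exact pow_le_pow_left₀ (hfpos x).le (hfC x) 2
  set I : ℝ := ∫ x, f x ^ 2 ∂μ with hIdef
  have hI : (0:ℝ) < I := by
    have h1 : (δ ^ 2 : ℝ) ≤ I := by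
      have : (δ ^ 2 : ℝ) = ∫ _x, δ ^ 2 ∂μ := by simp
      rw [this]
      exact integral_mono (integrable_const _) int_f2 fun x =>
        pow_le_pow_left₀ hδ.le (hlb x) 2
    exact lt_of_lt_of_le (pow_pos hδ 2) h1
  -- the inner integral as a function of p and its derivative
  set g : ℝ → ℝ := fun p => ∫ x, f x ^ ((2:ℝ) / p) ∂μ with hgdef
  set F' : ℝ → α → ℝ := fun p x => f x ^ ((2:ℝ) / p) * Real.log (f x) * (2 * -(p ^ 2)⁻¹)
    with hF'def
  set B : ℝ := C ^ (4:ℝ) * (|Real.log δ| + |Real.log C|) * 8 with hBdef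
  have hderiv : ∀ x : α, ∀ p ∈ Metric.ball (1:ℝ) (1/2),
      HasDerivAt (fun p : ℝ => f x ^ ((2:ℝ) / p)) (F' p x) p := by
    intro x p hp
    have hp0 : p ≠ 0 := by
      have h := Metric.mem_ball.mp hp
      rw [Real.dist_eq, abs_lt] at h
      intro h0; rw [h0] at h; norm_num at h
    have hu : HasDerivAt (fun p : ℝ => (2:ℝ) / p) (2 * -(p ^ 2)⁻¹) p := by
      simpa [div_eq_mul_inv] using (hasDerivAt_inv hp0).const_mul (2:ℝ)
    exact ((Real.hasStrictDerivAt_const_rpow (hfpos x) ((2:ℝ)/p)).hasDerivAt).comp p hu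
  have hbound : ∀ x : α, ∀ p ∈ Metric.ball (1:ℝ) (1/2), ‖F' p x‖ ≤ B := by
    intro x p hp
    have h := Metric.mem_ball.mp hp
    rw [Real.dist_eq, abs_lt] at h
    have hp1 : (1:ℝ)/2 < p := by linarith [h.1]
    have hp2 : p < (3:ℝ)/2 := by linarith [h.2]
    have h2p : (2:ℝ)/p ≤ 4 := by
      rw [div_le_iff₀ (by linarith)]; linarith
    have h2p0 : (0:ℝ) ≤ 2/p := by positivity
    have h1 : f x ^ ((2:ℝ)/p) ≤ C ^ (4:ℝ) := by
      calc f x ^ ((2:ℝ)/p) ≤ C ^ ((2:ℝ)/p) :=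
            Real.rpow_le_rpow (hfpos x).le (hfC x) h2p0
        _ ≤ C ^ (4:ℝ) := Real.rpow_le_rpow_of_exponent_le hC1 h2p
    have habs : |Real.log (f x)| ≤ |Real.log δ| + |Real.log C| := by
      rw [abs_le]
      constructor
      · have hd : Real.log δ ≤ Real.log (f x) := Real.log_le_log hδ (hlb x)
        have := neg_abs_le (Real.log δ)
        have := abs_nonneg (Real.log C)
        linarith
      · have hc : Real.log (f x) ≤ Real.log C := Real.log_le_log (hfpos x) (hfC x)
        have := le_abs_self (Real.log C)
        have := abs_nonneg (Real.log δ)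
        linarith
    have h3 : |2 * -(p ^ 2)⁻¹| ≤ 8 := by
      rw [abs_mul, abs_neg, abs_inv, abs_two, abs_of_nonneg (sq_nonneg p)]
      have hps : (1:ℝ)/4 ≤ p ^ 2 := by nlinarith
      have hinv : (p ^ 2)⁻¹ ≤ 4 := by
        rw [inv_le_comm₀ (by nlinarith) (by norm_num)]
        linarith
      linarith
    have hfn : (0:ℝ) ≤ f x ^ ((2:ℝ)/p) := Real.rpow_nonneg (hfpos x).le _
    rw [hF'def]
    have hsplit : ‖f x ^ ((2:ℝ)/p) * Real.log (f x) * (2 * -(p ^ 2)⁻¹)‖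
        = f x ^ ((2:ℝ)/p) * |Real.log (f x)| * |2 * -(p ^ 2)⁻¹| := by
      rw [Real.norm_eq_abs, abs_mul, abs_mul, abs_of_nonneg hfn]
    rw [hsplit]
    calc f x ^ ((2:ℝ)/p) * |Real.log (f x)| * |2 * -(p ^ 2)⁻¹|
        ≤ C ^ (4:ℝ) * (|Real.log δ| + |Real.log C|) * 8 := by
          apply mul_le_mul _ h3 (abs_nonneg _) (by positivity)
          exact mul_le_mul h1 habs (abs_nonneg _) (Real.rpow_nonneg hC0.le _)
      _ = B := rfl
  have hF1int : Integrable (fun x => f x ^ ((2:ℝ) / 1)) μ := by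
    simpa only [h21] using int_f2
  have hF'meas : AEStronglyMeasurable (F' 1) μ := by
    apply Measurable.aestronglyMeasurable
    exact ((hf.pow_const _).mul hf.log).mul_const _
  have key := hasDerivAt_integral_of_dominated_loc_of_deriv_le
      (μ := μ) (F := fun p x => f x ^ ((2:ℝ) / p)) (F' := F') (x₀ := (1:ℝ))
      (bound := fun _ => B) (Metric.ball_mem_nhds _ one_half_pos)
      (Eventually.of_forall fun p => (hf.pow_const _).aestronglyMeasurable)
      hF1int hF'meas
      (Eventually.of_forall fun x => hbound x)
      (integrable_const B)
      (Eventually.of_forall fun x => hderiv x)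
  set D : ℝ := ∫ x, F' 1 x ∂μ with hDdef
  have hDg : HasDerivAt g D 1 := key.2
  have hg1 : g 1 = I := by
    rw [hgdef]
    exact integral_congr_ae (Eventually.of_forall fun x => h21 x)
  have hI0 : (0:ℝ) < g 1 := hg1 ▸ hI
  -- derivative of p ↦ (g p) ^ p at 1
  have hgd : HasDerivAt (fun p : ℝ => g p ^ p)
      (D * 1 * g 1 ^ ((1:ℝ) - 1) + 1 * g 1 ^ (1:ℝ) * Real.log (g 1)) 1 :=
    hDg.rpow (hasDerivAt_id 1) hI0
  have hL' : D * 1 * g 1 ^ ((1:ℝ) - 1) + 1 * g 1 ^ (1:ℝ) * Real.log (g 1)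
      = D + I * Real.log I := by
    rw [hg1]
    norm_num [Real.rpow_one]
  rw [hL'] at hgd
  have hslope : Tendsto (slope (fun p : ℝ => g p ^ p) 1) (𝓝[>] 1)
      (𝓝 (D + I * Real.log I)) :=
    (hasDerivAt_iff_tendsto_slope.mp hgd).mono_left
      (nhdsWithin_mono _ fun x hx => (ne_of_gt hx : x ≠ 1))
  have hneg : Tendsto (fun p : ℝ => -p) (𝓝[>] (1:ℝ)) (𝓝 (-1)) :=
    (continuous_neg.tendsto 1).mono_left nhdsWithin_le_nhds
  have hmain : Tendsto (fun p : ℝ => (-p) * slope (fun p : ℝ => g p ^ p) 1 p)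
      (𝓝[>] 1) (𝓝 ((-1) * (D + I * Real.log I))) := hneg.mul hslope
  -- identify the target value
  have hT : (∫ x, f x ^ 2 * Real.log (f x ^ 2 / ∫ y, f y ^ 2 ∂μ) ∂μ)
      = (-1) * (D + I * Real.log I) := by
    have hpt : ∀ x, f x ^ 2 * Real.log (f x ^ 2 / I)
        = -(F' 1 x) + (-Real.log I) * f x ^ 2 := by
      intro x
      rw [Real.log_div (pow_ne_zero 2 (ne_of_gt (hfpos x))) (ne_of_gt hI), Real.log_pow]
      rw [hF'def]
      simp only [h21 x]
      push_cast
      ring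
    calc (∫ x, f x ^ 2 * Real.log (f x ^ 2 / ∫ y, f y ^ 2 ∂μ) ∂μ)
        = ∫ x, (-(F' 1 x) + (-Real.log I) * f x ^ 2) ∂μ :=
          integral_congr_ae (Eventually.of_forall fun x => hpt x)
      _ = (∫ x, -(F' 1 x) ∂μ) + ∫ x, (-Real.log I) * f x ^ 2 ∂μ :=
          integral_add key.1.neg (int_f2.const_mul _)
      _ = -D + (-Real.log I) * I := by
          rw [integral_neg, integral_const_mul, ← hDdef, ← hIdef]
      _ = (-1) * (D + I * Real.log I) := by ring
  rw [hT]
  apply hmain.congr'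
  filter_upwards [self_mem_nhdsWithin] with p hp
  have hp1 : (1:ℝ) < p := hp
  have hne : p - 1 ≠ 0 := sub_ne_zero.mpr (ne_of_gt hp1)
  have hF1 : g 1 ^ (1:ℝ) = I := by rw [Real.rpow_one, hg1]
  rw [slope_def_field, hF1]
  field_simp
  ring
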